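/- With W the averaged isometry of the previous statement, if V has finite propagation R₀ with respect to a coarsely equivariant coarse map f : Z' → Z (with equivariance defect M₁), then W has finite propagation at most R₀ + M₁: for φ ∈ C_c(Z), φ' ∈ C_c(Z') with d(supp φ, f(supp φ')) > R₀ + M₁, one has π^∞(φ) W π'^∞(φ') = 0. -/
import Mathlib


open ContinuousLinearMap Function
open scoped Classical

/-- Finite propagation of the averaged covering isometry: in the averaging construction
`W = Σ_g U_g E_g V_c E'_{g⁻¹}` over a coarsely equivariant coarse map `f : Z' → Z` (with
equivariance defect `M₁` and Γ-invariant metric on `Z`), if the local piece `V_c` has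
propagation `≤ R₀` relative to `f`, then `W` has propagation at most `R₀ + M₁`: for
functions `φ, ψ` with `dist (supp φ) (f (supp ψ)) > R₀ + M₁` one has
`π(φ) W π'(ψ) = 0`. -/
theorem averaged_isometry_finite_propagation
    {Γ : Type*} [Group Γ]
    {Z Z' : Type*} [MetricSpace Z] [MetricSpace Z'] [MulAction Γ Z] [MulAction Γ Z']
    {K K' : Type*}
    [NormedAddCommGroup K] [InnerProductSpace ℂ K] [CompleteSpace K]
    [NormedAddCommGroup K'] [InnerProductSpace ℂ K'] [CompleteSpace K']
    -- the metric of Z is Γ-invariant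
    (hisoZ : ∀ (g : Γ) (x y : Z), dist (g • x) (g • y) = dist x y)
    -- f is a coarsely equivariant map with defect M₁
    (f : Z' → Z) (M₁ : ℝ) (hM₁ : 0 ≤ M₁)
    (hfequiv : ∀ (g : Γ) (z' : Z'), dist (f (g • z')) (g • f z') ≤ M₁)
    -- unitary representations E on K and E' on K'
    (E : Γ → K →L[ℂ] K) (E' : Γ → K' →L[ℂ] K')
    (hE1 : E 1 = 1) (hEmul : ∀ g h : Γ, E (g * h) = E g ∘L E h)
    (hEadj : ∀ g : Γ, adjoint (E g) = E g⁻¹)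
    (hE'1 : E' 1 = 1) (hE'mul : ∀ g h : Γ, E' (g * h) = E' g ∘L E' h)
    (hE'adj : ∀ g : Γ, adjoint (E' g) = E' g⁻¹)
    -- representations of function algebras, covariant for the actions
    (π : (Z → ℂ) → (K →L[ℂ] K)) (π' : (Z' → ℂ) → (K' →L[ℂ] K'))
    (hcovπ : ∀ (g : Γ) (φ : Z → ℂ),
      π φ ∘L E g = E g ∘L π (fun z => φ (g • z)))
    (hcovπ' : ∀ (g : Γ) (ψ : Z' → ℂ),
      π' ψ ∘L E' g = E' g ∘L π' (fun z => ψ (g • z)))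
    -- the family (U_g), commuting with π
    (U : Γ → K →L[ℂ] K)
    (hUorth : ∀ g g' : Γ,
      adjoint (U g) ∘L U g' = if g = g' then (1 : K →L[ℂ] K) else 0)
    (hUsum : ∀ v : K, HasSum (fun g : Γ => U g (adjoint (U g) v)) v)
    (hUequiv : ∀ g h : Γ, U g ∘L E h = E h ∘L U (h⁻¹ * g))
    (hUπ : ∀ (g : Γ) (φ : Z → ℂ), π φ ∘L U g = U g ∘L π φ)
    -- the local piece Vc (= V π'(√c)) has propagation ≤ R₀ relative to f
    (Vc : K' →L[ℂ] K) (R₀ : ℝ) (hR₀ : 0 ≤ R₀)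
    (hVcProp : ∀ (φ : Z → ℂ) (ψ : Z' → ℂ),
      (∀ x ∈ support φ, ∀ y ∈ support ψ, dist x (f y) > R₀) →
      π φ ∘L Vc ∘L π' ψ = 0)
    -- W is the averaged operator Σ_g U_g E_g Vc E'_{g⁻¹}
    (W : K' →L[ℂ] K)
    (hW : ∀ v : K', HasSum (fun g : Γ => U g (E g (Vc (E' g⁻¹ v)))) (W v)) :
    -- conclusion: W has propagation at most R₀ + M₁
    ∀ (φ : Z → ℂ) (ψ : Z' → ℂ),
      (∀ x ∈ support φ, ∀ y ∈ support ψ, dist x (f y) > R₀ + M₁) →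
      π φ ∘L W ∘L π' ψ = 0 := by
  intro φ ψ hsep
  ext v
  simp only [ContinuousLinearMap.comp_apply, ContinuousLinearMap.zero_apply]
  have h1 := hW (π' ψ v)
  have h2 : HasSum (fun g : Γ => π φ (U g (E g (Vc (E' g⁻¹ ((π' ψ) v))))))
      (π φ (W (π' ψ v))) := (π φ).hasSum h1
  have hzero : ∀ g : Γ, π φ (U g (E g (Vc (E' g⁻¹ ((π' ψ) v))))) = 0 := by
    intro g
    -- propagation estimate for the conjugated functions
    have key : π (fun z => φ (g • z)) ∘L Vc ∘L π' (fun z => ψ (g • z)) = 0 := by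
      apply hVcProp
      intro x hx y hy
      have hx' : g • x ∈ support φ := hx
      have hy' : g • y ∈ support ψ := hy
      have h3 := hsep _ hx' _ hy'
      have h4 := hfequiv g y
      have h5 : dist x (f y) = dist (g • x) (g • f y) := (hisoZ g x (f y)).symm
      have h6 := dist_triangle (g • x) (g • f y) (f (g • y))
      have h7 := dist_comm (g • f y) (f (g • y))
      linarith
    set w := E' g⁻¹ v with hw
    have hEv : E' g w = v := by
      have : (E' g ∘L E' g⁻¹) v = (1 : K' →L[ℂ] K') v := by
        rw [← hE'mul, mul_inv_cancel, hE'1]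
      simpa [ContinuousLinearMap.comp_apply] using this
    have hstep1 : E' g⁻¹ ((π' ψ) v) = π' (fun z => ψ (g • z)) w := by
      have := congrArg (fun (T : K' →L[ℂ] K') => E' g⁻¹ (T w)) (hcovπ' g ψ)
      simp only [ContinuousLinearMap.comp_apply] at this
      rw [hEv] at this
      rw [this]
      have : (E' g⁻¹ ∘L E' g) (π' (fun z => ψ (g • z)) w)
          = (1 : K' →L[ℂ] K') (π' (fun z => ψ (g • z)) w) := by
        rw [← hE'mul, inv_mul_cancel, hE'1]
      simpa [ContinuousLinearMap.comp_apply] using this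
    have hstep2 : π φ (U g (E g (Vc (E' g⁻¹ ((π' ψ) v)))))
        = U g (π φ (E g (Vc (E' g⁻¹ ((π' ψ) v))))) := by
      have := congrArg (fun (T : K →L[ℂ] K) => T (E g (Vc (E' g⁻¹ ((π' ψ) v))))) (hUπ g φ)
      simpa [ContinuousLinearMap.comp_apply] using this
    have hstep3 : π φ (E g (Vc (E' g⁻¹ ((π' ψ) v))))
        = E g (π (fun z => φ (g • z)) (Vc (E' g⁻¹ ((π' ψ) v)))) := by
      have := congrArg (fun (T : K →L[ℂ] K) => T (Vc (E' g⁻¹ ((π' ψ) v)))) (hcovπ g φ)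
      simpa [ContinuousLinearMap.comp_apply] using this
    rw [hstep2, hstep3, hstep1]
    have : (π (fun z => φ (g • z)) ∘L Vc ∘L π' (fun z => ψ (g • z))) w
        = (0 : K' →L[ℂ] K) w := by rw [key]
    simp only [ContinuousLinearMap.comp_apply, ContinuousLinearMap.zero_apply] at this
    rw [this]
    simp
  have h2' : HasSum (fun _ : Γ => (0 : K)) (π φ (W (π' ψ v))) := by
    simpa [hzero] using h2
  exact h2'.unique hasSum_zero
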